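/- Let p ≥ 1, k ≥ 1 and γ > 0, and let v_1, …, v_k be independent random vectors in ℝ^p on a common probability space, each of which is zero-mean, isotropic, (4,2,γ)-hypercontractive, and has zero third moment marginals. Set v̄_s := (1, v_sᵀ)ᵀ ∈ ℝ^{p+1} and let b_k := v̄_1 ⊗ v̄_2 ⊗ ⋯ ⊗ v̄_{k−1} ⊗ v_k ∈ ℝ^{p(p+1)^{k−1}} (for k = 1, b_1 := v_1). Then for every q ∈ ℝ^{p(p+1)^{k−1}}: E[(qᵀb_k)⁴] ≤ (max(3,γ))^k · ‖q‖⁴₂. -/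

import Mathlib

open MeasureTheory ProbabilityTheory Real
open scoped ENNReal RealInnerProductSpace BigOperators

def Isotropic {Ω : Type*} [MeasurableSpace Ω] {p : ℕ}
    (u : Ω → EuclideanSpace ℝ (Fin p)) (μ : Measure Ω) : Prop :=
  ∀ x : EuclideanSpace ℝ (Fin p), (∫ ω, ⟪u ω, x⟫ ^ 2 ∂μ) = ‖x‖ ^ 2

def Hypercontractive {Ω : Type*} [MeasurableSpace Ω] {p : ℕ} (γ : ℝ)
    (u : Ω → EuclideanSpace ℝ (Fin p)) (μ : Measure Ω) : Prop :=
  ∀ x : EuclideanSpace ℝ (Fin p),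
    (∫ ω, ⟪u ω, x⟫ ^ 4 ∂μ) ≤ γ * (∫ ω, ⟪u ω, x⟫ ^ 2 ∂μ) ^ 2

def ZeroThirdMoment {Ω : Type*} [MeasurableSpace Ω] {p : ℕ}
    (u : Ω → EuclideanSpace ℝ (Fin p)) (μ : Measure Ω) : Prop :=
  ∀ x : EuclideanSpace ℝ (Fin p), (∫ ω, ⟪u ω, x⟫ ^ 3 ∂μ) = 0

/-- `ū = (1, uᵀ)ᵀ ∈ ℝ^{p+1}`. -/
noncomputable def baru {p : ℕ} (u : EuclideanSpace ℝ (Fin p)) : Fin (p + 1) → ℝ :=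
  Fin.cons 1 (fun i => u i)

/-- the block `b_k = v̄_1 ⊗ ⋯ ⊗ v̄_{k−1} ⊗ v_k ∈ ℝ^{p(p+1)^{k−1}}` (`b_1 = v_1`),
indexed by `(Fin (k−1) → Fin (p+1)) × Fin p`. -/
noncomputable def blockVec {p : ℕ} (v : ℕ → EuclideanSpace ℝ (Fin p)) (k : ℕ) :
    EuclideanSpace ℝ ((Fin (k - 1) → Fin (p + 1)) × Fin p) :=
  WithLp.toLp 2 (fun c : (Fin (k - 1) → Fin (p + 1)) × Fin p =>
    (∏ s : Fin (k - 1), baru (v (s.val + 1)) (c.1 s)) * v k c.2)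

/-! ### Auxiliary material -/

section helpers

lemma inner_sum_form {ι : Type*} [Fintype ι] (x t : EuclideanSpace ℝ ι) :
    ⟪x, t⟫ = ∑ j, x j * t j := by
  simp [PiLp.inner_apply]
  exact Finset.sum_congr rfl (fun _ _ => mul_comm _ _)

lemma norm_sq_sum {ι : Type*} [Fintype ι] (x : EuclideanSpace ℝ ι) :
    ‖x‖ ^ 2 = ∑ j, x j ^ 2 := by
  rw [← real_inner_self_eq_norm_sq, inner_sum_form]
  congr 1
  funext j
  ring

lemma ennreal_le_sqrt {X Y : ℝ≥0∞} (h : X ≤ Y ^ (2:ℝ)) : X ^ ((1:ℝ)/2) ≤ Y := by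
  calc X ^ ((1:ℝ)/2) ≤ (Y ^ (2:ℝ)) ^ ((1:ℝ)/2) := ENNReal.rpow_le_rpow h (by norm_num)
    _ = Y := by rw [← ENNReal.rpow_mul]; norm_num

lemma ennreal_sq_from_sqrt {X Y : ℝ≥0∞} (h : X ^ ((1:ℝ)/2) ≤ Y) : X ≤ Y ^ (2:ℝ) := by
  calc X = (X ^ ((1:ℝ)/2)) ^ (2:ℝ) := by rw [← ENNReal.rpow_mul]; norm_num
    _ ≤ Y ^ (2:ℝ) := ENNReal.rpow_le_rpow h (by norm_num)

lemma rpow_two_eq (x : ℝ≥0∞) : x ^ (2:ℝ) = x ^ 2 := by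
  rw [show (2:ℝ) = ((2:ℕ):ℝ) by norm_num, ENNReal.rpow_natCast]

lemma minkowski_sum {Ω : Type*} [MeasurableSpace Ω] (μ : Measure Ω)
    {ι : Type*} (s : Finset ι) (f : ι → Ω → ℝ≥0∞) (hf : ∀ i, Measurable (f i)) :
    (∫⁻ ω, (∑ i ∈ s, f i ω) ^ (2:ℝ) ∂μ) ^ ((1:ℝ)/2) ≤
      ∑ i ∈ s, (∫⁻ ω, f i ω ^ (2:ℝ) ∂μ) ^ ((1:ℝ)/2) := by
  classical
  induction s using Finset.induction with
  | empty =>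
    simp only [Finset.sum_empty]
    rw [ENNReal.zero_rpow_of_pos (by norm_num), lintegral_zero,
      ENNReal.zero_rpow_of_pos (by norm_num)]
  | insert a s hnotmem ih =>
    simp only [Finset.sum_insert hnotmem]
    calc (∫⁻ ω, (f a ω + ∑ i ∈ s, f i ω) ^ (2:ℝ) ∂μ) ^ ((1:ℝ)/2)
        ≤ (∫⁻ ω, f a ω ^ (2:ℝ) ∂μ) ^ ((1:ℝ)/2) +
          (∫⁻ ω, (∑ i ∈ s, f i ω) ^ (2:ℝ) ∂μ) ^ ((1:ℝ)/2) :=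
          ENNReal.lintegral_Lp_add_le (hf a).aemeasurable
            (Finset.measurable_sum s (fun i _ => hf i)).aemeasurable (by norm_num)
      _ ≤ _ := by exact add_le_add le_rfl ih

lemma iIndepFun_precomp {Ω : Type*} [MeasurableSpace Ω] {μ : Measure Ω}
    {ι ι' : Type*} {β : Type*} [mβ : MeasurableSpace β] {f : ι → Ω → β}
    (h : iIndepFun f μ) {g : ι' → ι} (hg : Function.Injective g) :
    iIndepFun (fun i => f (g i)) μ := by
  classical
  rw [iIndepFun_iff_measure_inter_preimage_eq_mul] at h ⊢
  intro S sets hsets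
  set sets' : ι → Set β := fun i =>
    if hi : ∃ i' ∈ S, g i' = i then sets hi.choose else Set.univ with hsets'_def
  have hchoose : ∀ i' ∈ S, sets' (g i') = sets i' := by
    intro i' hi'
    have hex : ∃ j ∈ S, g j = g i' := ⟨i', hi', rfl⟩
    have h1 := hex.choose_spec
    have h2 : hex.choose = i' := hg h1.2
    simp only [hsets'_def, dif_pos hex, h2]
  have key := h (S.image g) (sets := sets') ?_
  · rw [Finset.set_biInter_finset_image] at key
    rw [Finset.prod_image (fun x _ y _ hxy => hg hxy)] at key
    have e1 : (⋂ i ∈ S, f (g i) ⁻¹' sets' (g i)) = ⋂ i ∈ S, (fun ω => f (g i) ω) ⁻¹' sets i := by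
      apply Set.iInter_congr; intro i; apply Set.iInter_congr; intro hi
      rw [hchoose i hi]
    have e2 : ∀ i ∈ S, f (g i) ⁻¹' sets' (g i) = (fun ω => f (g i) ω) ⁻¹' sets i := by
      intro i hi; rw [hchoose i hi]
    rw [e1, Finset.prod_congr rfl (fun i hi => by rw [e2 i hi])] at key
    exact key
  · intro i hi
    simp only [hsets'_def]
    split_ifs with hex
    · exact hsets _ hex.choose_spec.1
    · exact MeasurableSet.univ

end helpers

section single
variable {Ω : Type*} [MeasurableSpace Ω] {μ : Measure Ω} [IsProbabilityMeasure μ] {p : ℕ}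
  {u : Ω → EuclideanSpace ℝ (Fin p)}

lemma meas_inner_right (hu : Measurable u) (x : EuclideanSpace ℝ (Fin p)) :
    Measurable (fun ω => ⟪u ω, x⟫) := by
  simp only [PiLp.inner_apply, RCLike.inner_apply, conj_trivial]
  exact Finset.measurable_sum _ (fun i _ => ((measurable_pi_apply i).comp ((WithLp.measurable_ofLp 2 _).comp hu)).const_mul _)

omit [IsProbabilityMeasure μ] in
lemma integrable_of_pos_integral {f : Ω → ℝ} (hf : 0 < ∫ ω, f ω ∂μ) : Integrable f μ := by
  by_contra h
  rw [integral_undef h] at hf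
  exact lt_irrefl _ hf

lemma memLp2_inner (hu : Measurable u) (hiso : Isotropic u μ)
    (x : EuclideanSpace ℝ (Fin p)) : MemLp (fun ω => ⟪u ω, x⟫) 2 μ := by
  rcases eq_or_ne x 0 with rfl | hx
  · simp only [inner_zero_right]
    exact memLp_const 0
  · rw [memLp_two_iff_integrable_sq (meas_inner_right hu x).aestronglyMeasurable]
    apply integrable_of_pos_integral
    rw [hiso x]
    exact pow_pos (norm_pos_iff.mpr hx) 2

lemma integrable_inner (hu : Measurable u) (hiso : Isotropic u μ)
    (x : EuclideanSpace ℝ (Fin p)) : Integrable (fun ω => ⟪u ω, x⟫) μ :=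
  (memLp2_inner hu hiso x).integrable one_le_two

lemma integrable_vec (hu : Measurable u) (hiso : Isotropic u μ) : Integrable u μ := by
  have hcomp : ∀ i : Fin p, Integrable (fun ω => u ω i) μ := by
    intro i
    have := integrable_inner hu hiso (EuclideanSpace.single i 1)
    simpa [PiLp.inner_apply, EuclideanSpace.single_apply] using this
  have hrep : ∀ ω, u ω = ∑ i : Fin p, u ω i • EuclideanSpace.single i (1:ℝ) := by
    intro ω
    ext j
    have h0 : (∑ x : Fin p, u ω x • EuclideanSpace.single x (1:ℝ)) j
        = ∑ x : Fin p, (u ω x • EuclideanSpace.single x (1:ℝ)) j :=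
      by rw [WithLp.ofLp_sum, Finset.sum_apply]
    rw [h0]
    simp [EuclideanSpace.single_apply]
  rw [show u = fun ω => ∑ i : Fin p, u ω i • EuclideanSpace.single i (1:ℝ) from funext hrep]
  exact integrable_finset_sum _ (fun i _ => (hcomp i).smul_const _)

lemma integral_inner_zero (hu : Measurable u) (hiso : Isotropic u μ)
    (hmean : (∫ ω, u ω ∂μ) = 0) (x : EuclideanSpace ℝ (Fin p)) :
    (∫ ω, ⟪u ω, x⟫ ∂μ) = 0 := by
  have h1 : (∫ ω, ⟪x, u ω⟫ ∂μ) = ⟪x, ∫ ω, u ω ∂μ⟫ := integral_inner (integrable_vec hu hiso) x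
  calc (∫ ω, ⟪u ω, x⟫ ∂μ) = ∫ ω, ⟪x, u ω⟫ ∂μ := by simp_rw [real_inner_comm]
    _ = 0 := by rw [h1, hmean, inner_zero_right]

lemma abs_cube_le (x : ℝ) : |x ^ 3| ≤ 1 + x ^ 4 := by
  rcases le_total (|x|) 1 with h | h
  · have : |x ^ 3| ≤ 1 := by
      calc |x ^ 3| = |x| ^ 3 := by rw [abs_pow]
        _ ≤ 1 := pow_le_one₀ (abs_nonneg x) h
    nlinarith [sq_nonneg (x^2)]
  · have h3 : |x ^ 3| = |x| ^ 3 := by rw [abs_pow]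
    have h4 : |x| ^ 3 ≤ |x| ^ 4 := pow_le_pow_right₀ h (by norm_num)
    have h5 : |x| ^ 4 = x ^ 4 := by rw [← abs_pow]; exact abs_of_nonneg (by positivity)
    nlinarith

lemma quart_bound (x y : ℝ) : (x + y)^4 ≤ 8 * x^4 + 8 * y^4 := by
  nlinarith [sq_nonneg (x - y), sq_nonneg (x + y), sq_nonneg (x^2 - y^2), sq_nonneg (x^2 + y^2),
    sq_nonneg x, sq_nonneg y]

lemma lemB (hu : Measurable u) (hmean : (∫ ω, u ω ∂μ) = 0) (hiso : Isotropic u μ)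
    {γ : ℝ} (hγ : 0 < γ) (hhyp : Hypercontractive γ u μ) (hthird : ZeroThirdMoment u μ)
    (a : ℝ) (t : EuclideanSpace ℝ (Fin p)) :
    (ENNReal.ofReal ((a^2 + ‖t‖^2)^2) ≤ 2 * ∫⁻ ω, ENNReal.ofReal ((a + ⟪u ω, t⟫)^4) ∂μ) ∧
    ((∫⁻ ω, ENNReal.ofReal ((a + ⟪u ω, t⟫)^4) ∂μ) ≠ ∞ →
      (∫⁻ ω, ENNReal.ofReal ((a + ⟪u ω, t⟫)^4) ∂μ) ≤
        ENNReal.ofReal ((max 3 γ) * (a^2 + ‖t‖^2)^2)) := by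
  classical
  set T : Ω → ℝ := fun ω => ⟪u ω, t⟫ with hT_def
  have hT : Measurable T := meas_inner_right hu t
  set g : Ω → ℝ := fun ω => (a + T ω)^4 with hg_def
  have hgm : Measurable g := ((measurable_const.add hT).pow_const 4)
  have hg0 : ∀ ω, 0 ≤ g ω := fun ω => by positivity
  by_cases hgi : Integrable g μ
  · -- integrable case
    have hT4 : Integrable (fun ω => T ω ^ 4) μ := by
      apply Integrable.mono' ((hgi.const_mul 8).add (integrable_const (8 * a^4)))
        (hT.pow_const 4).aestronglyMeasurable
      filter_upwards with ω
      have h1 : |T ω ^ 4| = T ω ^ 4 := abs_of_nonneg (by positivity)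
      have h2 : T ω ^ 4 ≤ 8 * (a + T ω)^4 + 8 * a^4 := by
        have := quart_bound (a + T ω) (-a)
        have he : (a + T ω) + (-a) = T ω := by ring
        rw [he] at this
        nlinarith [this]
      show |T ω ^ 4| ≤ 8 * g ω + 8 * a ^ 4
      rw [h1]; exact h2
    have hT1 : Integrable T μ := integrable_inner hu hiso t
    have hm1 : (∫ ω, T ω ∂μ) = 0 := integral_inner_zero hu hiso hmean t
    have hT2 : Integrable (fun ω => T ω ^ 2) μ :=
      (memLp_two_iff_integrable_sq hT.aestronglyMeasurable).mp (memLp2_inner hu hiso t)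
    have hm2 : (∫ ω, T ω ^ 2 ∂μ) = ‖t‖ ^ 2 := hiso t
    have hT3 : Integrable (fun ω => T ω ^ 3) μ := by
      apply Integrable.mono' ((integrable_const (1:ℝ)).add hT4)
        (hT.pow_const 3).aestronglyMeasurable
      filter_upwards with ω
      simpa using abs_cube_le (T ω)
    have hm3 : (∫ ω, T ω ^ 3 ∂μ) = 0 := hthird t
    have hm4 : (∫ ω, T ω ^ 4 ∂μ) ≤ γ * ‖t‖ ^ 4 := by
      have := hhyp t
      rw [hm2] at this
      calc (∫ ω, T ω ^ 4 ∂μ) ≤ γ * (‖t‖^2)^2 := this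
        _ = γ * ‖t‖^4 := by ring
    have hm4' : ‖t‖ ^ 4 ≤ ∫ ω, T ω ^ 4 ∂μ := by
      have hmem : MemLp (fun ω => T ω ^ 2) 2 μ := by
        rw [memLp_two_iff_integrable_sq (hT.pow_const 2).aestronglyMeasurable]
        have : (fun ω => (T ω ^ 2) ^ 2) = fun ω => T ω ^ 4 := by funext ω; ring
        rw [this]
        exact hT4
      have hvar := variance_nonneg (fun ω => T ω ^ 2) μ
      rw [variance_eq_sub hmem] at hvar
      have h1 : μ[(fun ω => T ω ^ 2) ^ 2] = ∫ ω, T ω ^ 4 ∂μ := by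
        apply integral_congr_ae
        filter_upwards with ω
        simp [Pi.pow_apply]; ring
      have h2 : μ[(fun ω => T ω ^ 2)] = ‖t‖ ^ 2 := hm2
      rw [h1, h2] at hvar
      nlinarith [hvar]
    -- expansion
    have hexp : (∫ ω, g ω ∂μ) = a^4 + 6*a^2*‖t‖^2 + ∫ ω, T ω ^ 4 ∂μ := by
      have hge : g = fun ω => a^4 + (4*a^3 * T ω + (6*a^2 * T ω^2 + (4*a * T ω^3 + T ω^4))) := by
        funext ω; simp only [hg_def]; ring
      have I34 : Integrable (fun ω => 4*a * T ω^3 + T ω^4) μ := (hT3.const_mul _).add hT4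
      have I234 : Integrable (fun ω => 6*a^2 * T ω^2 + (4*a * T ω^3 + T ω^4)) μ :=
        (hT2.const_mul _).add I34
      have I1234 : Integrable (fun ω => 4*a^3 * T ω + (6*a^2 * T ω^2 + (4*a * T ω^3 + T ω^4))) μ :=
        (hT1.const_mul _).add I234
      rw [hge, integral_add (integrable_const _) I1234,
        integral_add (hT1.const_mul _) I234,
        integral_add (hT2.const_mul _) I34,
        integral_add (hT3.const_mul _) hT4,
        integral_const_mul, integral_const_mul, integral_const_mul, hm1, hm2, hm3]
      simp [measure_univ]
      ring
    have hlin : (∫⁻ ω, ENNReal.ofReal ((a + ⟪u ω, t⟫)^4) ∂μ) = ENNReal.ofReal (∫ ω, g ω ∂μ) :=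
      (ofReal_integral_eq_lintegral_ofReal hgi (ae_of_all _ hg0)).symm
    constructor
    · rw [hlin]
      have hkey : (a^2 + ‖t‖^2)^2 ≤ 2 * ∫ ω, g ω ∂μ := by
        rw [hexp]; nlinarith [hm4', sq_nonneg a, sq_nonneg ‖t‖, sq_nonneg (a*‖t‖)]
      calc ENNReal.ofReal ((a^2 + ‖t‖^2)^2) ≤ ENNReal.ofReal (2 * ∫ ω, g ω ∂μ) :=
            ENNReal.ofReal_le_ofReal hkey
        _ = 2 * ENNReal.ofReal (∫ ω, g ω ∂μ) := by
            rw [ENNReal.ofReal_mul (by norm_num)]; norm_num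
    · intro _
      rw [hlin]
      apply ENNReal.ofReal_le_ofReal
      have h3M : (3:ℝ) ≤ max 3 γ := le_max_left _ _
      have hγM : γ ≤ max 3 γ := le_max_right _ _
      rw [hexp]
      nlinarith [hm4, sq_nonneg a, sq_nonneg ‖t‖, sq_nonneg (a*‖t‖),
        mul_le_mul_of_nonneg_right hγM (by positivity : (0:ℝ) ≤ ‖t‖^4),
        mul_le_mul_of_nonneg_right h3M (by positivity : (0:ℝ) ≤ a^2*‖t‖^2),
        mul_le_mul_of_nonneg_right h3M (by positivity : (0:ℝ) ≤ a^4)]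
  · -- non-integrable case
    have hlin : (∫⁻ ω, ENNReal.ofReal ((a + ⟪u ω, t⟫)^4) ∂μ) = ∞ := by
      by_contra h
      exact hgi ((lintegral_ofReal_ne_top_iff_integrable hgm.aestronglyMeasurable
        (ae_of_all _ hg0)).mp h)
    constructor
    · rw [hlin]
      simp
    · intro h
      exact absurd hlin h

end single

/-! ### The inner-product with a block as an explicit sum -/

noncomputable def Sfun {Ω : Type*} {p : ℕ} (u : ℕ → Ω → EuclideanSpace ℝ (Fin p)) (m : ℕ)
    (q : ((Fin m → Fin (p + 1)) × Fin p) → ℝ) (ω : Ω) : ℝ :=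
  ∑ c : (Fin m → Fin (p + 1)) × Fin p,
    q c * ((∏ s : Fin m, baru (u s ω) (c.1 s)) * u m ω c.2)

lemma measurable_baru {p : ℕ} (j : Fin (p + 1)) :
    Measurable (fun x : EuclideanSpace ℝ (Fin p) => baru x j) := by
  induction j using Fin.cases with
  | zero => simp only [baru, Fin.cons_zero]; exact measurable_const
  | succ i => simp only [baru, Fin.cons_succ]; exact (measurable_pi_apply i).comp (WithLp.measurable_ofLp 2 _)

lemma measurable_Sfun {Ω : Type*} [MeasurableSpace Ω] {p : ℕ}
    (u : ℕ → Ω → EuclideanSpace ℝ (Fin p)) (m : ℕ)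
    (hmeas : ∀ s ≤ m, Measurable (u s))
    (q : ((Fin m → Fin (p + 1)) × Fin p) → ℝ) : Measurable (Sfun u m q) := by
  apply Finset.measurable_sum
  intro c _
  apply Measurable.const_mul
  apply Measurable.mul
  · apply Finset.measurable_prod
    intro s _
    exact (measurable_baru (c.1 s)).comp (hmeas s (by omega))
  · exact (measurable_pi_apply c.2).comp ((WithLp.measurable_ofLp 2 _).comp (hmeas m le_rfl))

lemma Sfun_base {Ω : Type*} {p : ℕ} (u : ℕ → Ω → EuclideanSpace ℝ (Fin p))
    (q : ((Fin 0 → Fin (p + 1)) × Fin p) → ℝ) (ω : Ω) :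
    Sfun u 0 q ω = ⟪u 0 ω, (WithLp.toLp 2 (fun j => q (Fin.elim0, j)) : EuclideanSpace ℝ (Fin p))⟫ := by
  unfold Sfun
  rw [Fintype.sum_prod_type]
  simp only [PiLp.inner_apply, RCLike.inner_apply, conj_trivial]
  rw [Finset.sum_eq_single_of_mem (Fin.elim0 : Fin 0 → Fin (p+1)) (Finset.mem_univ _)
    (fun b _ hb => absurd (Subsingleton.elim b Fin.elim0) hb)]
  congr 1
  funext j
  simp [mul_comm]

lemma Sfun_step {Ω : Type*} {p : ℕ} (u : ℕ → Ω → EuclideanSpace ℝ (Fin p)) (m : ℕ)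
    (q : ((Fin (m + 1) → Fin (p + 1)) × Fin p) → ℝ) (ω : Ω) :
    Sfun u (m + 1) q ω = ∑ i : Fin (p + 1), baru (u 0 ω) i *
      Sfun (fun s => u (s + 1)) m (fun c => q (Fin.cons i c.1, c.2)) ω := by
  unfold Sfun
  rw [Fintype.sum_prod_type]
  rw [← ((Fin.consEquiv (fun _ : Fin (m+1) => Fin (p+1))).sum_comp
    (fun F => ∑ j : Fin p, q (F, j) *
      ((∏ s : Fin (m+1), baru (u s ω) (F s)) * u (m+1) ω j)))]
  rw [Fintype.sum_prod_type]
  apply Finset.sum_congr rfl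
  intro i _
  rw [Finset.mul_sum]
  conv_rhs => rw [Fintype.sum_prod_type]
  apply Finset.sum_congr rfl
  intro f _
  apply Finset.sum_congr rfl
  intro j _
  simp only [Fin.consEquiv_apply]
  rw [Fin.prod_univ_succ]
  simp only [Fin.cons_zero, Fin.cons_succ]
  have hs : ∀ s : Fin m, baru (u ((s.succ : Fin (m+1)) : ℕ) ω) (f s)
      = baru (u ((s : ℕ) + 1) ω) (f s) := by
    intro s
    norm_num [Fin.val_succ]
  rw [Finset.prod_congr rfl (fun s _ => hs s)]
  have he : (Fin.consEquiv fun _ => Fin (p + 1)) (i, f) = Fin.cons i f := rfl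
  have h0 : ((0 : Fin (m+1)) : ℕ) = 0 := rfl
  rw [he, h0]
  ring

/-! ### The conditional-expectation machinery for one peeling step -/

noncomputable def Phi (p m : ℕ) (Q : ((Fin m → Fin (p + 1)) × Fin p) → ℝ)
    (y : Fin (m + 1) → EuclideanSpace ℝ (Fin p)) : ℝ :=
  ∑ c : (Fin m → Fin (p + 1)) × Fin p,
    Q c * ((∏ s : Fin m, baru (y s.castSucc) (c.1 s)) * y (Fin.last m) c.2)

lemma measurable_Phi {p m : ℕ} (Q : ((Fin m → Fin (p + 1)) × Fin p) → ℝ) :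
    Measurable (Phi p m Q) := by
  apply Finset.measurable_sum
  intro c _
  apply Measurable.const_mul
  apply Measurable.mul
  · apply Finset.measurable_prod
    intro s _
    exact (measurable_baru (c.1 s)).comp (measurable_pi_apply s.castSucc)
  · exact (measurable_pi_apply c.2).comp ((WithLp.measurable_ofLp 2 _).comp (measurable_pi_apply (Fin.last m)))

noncomputable def tvec (p m : ℕ) (Q : Fin (p+1) → ((Fin m → Fin (p + 1)) × Fin p) → ℝ)
    (y : Fin (m + 1) → EuclideanSpace ℝ (Fin p)) : EuclideanSpace ℝ (Fin p) :=
  WithLp.toLp 2 (fun j : Fin p => Phi p m (Q j.succ) y)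

lemma sum_baru_phi {p m : ℕ} (Q : Fin (p+1) → ((Fin m → Fin (p + 1)) × Fin p) → ℝ)
    (x : EuclideanSpace ℝ (Fin p)) (y : Fin (m + 1) → EuclideanSpace ℝ (Fin p)) :
    ∑ i : Fin (p+1), baru x i * Phi p m (Q i) y =
      Phi p m (Q 0) y + ⟪x, tvec p m Q y⟫ := by
  rw [Fin.sum_univ_succ, inner_sum_form]
  simp only [baru, tvec, PiLp.toLp_apply, Fin.cons_zero, Fin.cons_succ, one_mul]

lemma phi_sq_sum {p m : ℕ} (Q : Fin (p+1) → ((Fin m → Fin (p + 1)) × Fin p) → ℝ)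
    (y : Fin (m + 1) → EuclideanSpace ℝ (Fin p)) :
    Phi p m (Q 0) y ^ 2 + ‖tvec p m Q y‖^2 = ∑ i : Fin (p+1), Phi p m (Q i) y ^ 2 := by
  rw [norm_sq_sum (tvec p m Q y), Fin.sum_univ_succ]
  simp only [tvec, PiLp.toLp_apply]

lemma sum_sq_base {p : ℕ} (q : ((Fin 0 → Fin (p+1)) × Fin p) → ℝ) :
    ∑ c, q c ^ 2 = ∑ j, q (Fin.elim0, j) ^ 2 := by
  rw [Fintype.sum_prod_type]
  rw [Finset.sum_eq_single_of_mem (Fin.elim0 : Fin 0 → Fin (p+1)) (Finset.mem_univ _)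
    (fun b _ hb => absurd (Subsingleton.elim b Fin.elim0) hb)]

lemma sum_sq_step {p m : ℕ} (q : ((Fin (m+1) → Fin (p+1)) × Fin p) → ℝ) :
    ∑ i : Fin (p+1), ∑ c : (Fin m → Fin (p+1)) × Fin p, q (Fin.cons i c.1, c.2) ^ 2
      = ∑ c, q c ^ 2 := by
  conv_rhs => rw [Fintype.sum_prod_type,
    ← ((Fin.consEquiv (fun _ : Fin (m+1) => Fin (p+1))).sum_comp
      (fun F => ∑ j : Fin p, q (F, j) ^ 2)), Fintype.sum_prod_type]
  apply Finset.sum_congr rfl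
  intro i _
  rw [Fintype.sum_prod_type]
  rfl

/-! ### The main induction -/

lemma aux {Ω : Type*} [MeasurableSpace Ω] {μ : Measure Ω} [IsProbabilityMeasure μ]
    {p : ℕ} {γ : ℝ} (hγ : 0 < γ) (m : ℕ) :
    ∀ (u : ℕ → Ω → EuclideanSpace ℝ (Fin p)),
    (∀ s ≤ m, Measurable (u s)) →
    iIndepFun (m := fun _ : Fin (m+1) => (inferInstance : MeasurableSpace (EuclideanSpace ℝ (Fin p))))
      (fun s : Fin (m+1) => u s) μ →
    (∀ s ≤ m, (∫ ω, u s ω ∂μ) = 0) →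
    (∀ s ≤ m, Isotropic (u s) μ) →
    (∀ s ≤ m, Hypercontractive γ (u s) μ) →
    (∀ s ≤ m, ZeroThirdMoment (u s) μ) →
    ∀ q : ((Fin m → Fin (p+1)) × Fin p) → ℝ,
    (∫⁻ ω, ENNReal.ofReal (Sfun u m q ω ^ 4) ∂μ) ≠ ∞ →
    (∫⁻ ω, ENNReal.ofReal (Sfun u m q ω ^ 4) ∂μ) ≤
      ENNReal.ofReal ((max 3 γ)^(m+1) * (∑ c, q c ^ 2)^2) := by
  induction m with
  | zero =>
    intro u hmeas hindep hmean hiso hhyp hthird q hfin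
    have heq : (∫⁻ ω, ENNReal.ofReal (Sfun u 0 q ω ^ 4) ∂μ)
        = ∫⁻ ω, ENNReal.ofReal ((0 + ⟪u 0 ω,
            (WithLp.toLp 2 (fun j => q (Fin.elim0, j)) : EuclideanSpace ℝ (Fin p))⟫)^4) ∂μ := by
      apply lintegral_congr
      intro ω
      rw [Sfun_base, zero_add]
    rw [heq] at hfin ⊢
    have hlemB := (lemB (hmeas 0 le_rfl) (hmean 0 le_rfl) (hiso 0 le_rfl) hγ (hhyp 0 le_rfl)
      (hthird 0 le_rfl) 0 (WithLp.toLp 2 (fun j => q (Fin.elim0, j)))).2 hfin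
    refine le_trans hlemB (le_of_eq ?_)
    congr 1
    rw [norm_sq_sum, sum_sq_base q]
    norm_num
  | succ m ih =>
    intro u hmeas hindep hmean hiso hhyp hthird q hfin
    classical
    set M := max 3 γ with hM
    have hM3 : (3:ℝ) ≤ M := le_max_left _ _
    have hM0 : (0:ℝ) ≤ M := by linarith
    set u' : ℕ → Ω → EuclideanSpace ℝ (Fin p) := fun s => u (s + 1) with hu'
    set Q : Fin (p+1) → ((Fin m → Fin (p + 1)) × Fin p) → ℝ :=
      fun i c => q (Fin.cons i c.1, c.2) with hQ
    set Y : Ω → (Fin (m+1) → EuclideanSpace ℝ (Fin p)) :=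
      fun ω s => u ((s : ℕ) + 1) ω with hY
    have hXm : Measurable (u 0) := hmeas 0 (by omega)
    have hYm : Measurable Y := measurable_pi_lambda _ (fun s => hmeas ((s:ℕ)+1) (by omega))
    have hPhiY : ∀ i ω, Phi p m (Q i) (Y ω) = Sfun u' m (Q i) ω := by
      intro i ω
      rfl
    have hstep : ∀ ω, Sfun u (m+1) q ω
        = Phi p m (Q 0) (Y ω) + ⟪u 0 ω, tvec p m Q (Y ω)⟫ := by
      intro ω
      rw [Sfun_step, ← sum_baru_phi Q (u 0 ω) (Y ω)]
      apply Finset.sum_congr rfl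
      intro i _
      rw [hPhiY]
    -- independence of u 0 and Y
    have hXY : IndepFun (u 0) Y μ := by
      have h1 := hindep.indepFun_finset {(0 : Fin (m+2))} ({(0 : Fin (m+2))}ᶜ)
        disjoint_compl_right (fun i => hmeas (i : ℕ) (Nat.lt_succ_iff.mp i.isLt))
      have hφ : Measurable (fun w : ({(0 : Fin (m+2))} : Finset (Fin (m+2))) →
          EuclideanSpace ℝ (Fin p) => w ⟨0, Finset.mem_singleton_self 0⟩) :=
        measurable_pi_apply _
      have hψ : Measurable (fun (w : (({(0 : Fin (m+2))}ᶜ : Finset (Fin (m+2))) : Type _) →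
          EuclideanSpace ℝ (Fin p)) (s : Fin (m+1)) =>
            w ⟨s.succ, Finset.mem_compl.mpr (by simp [Fin.succ_ne_zero])⟩) :=
        measurable_pi_lambda _ (fun s => measurable_pi_apply _)
      exact h1.comp hφ hψ
    set νX := μ.map (u 0) with hνX
    set νY := μ.map Y with hνY
    haveI hPX : IsProbabilityMeasure νX := Measure.isProbabilityMeasure_map hXm.aemeasurable
    haveI hPY : IsProbabilityMeasure νY := Measure.isProbabilityMeasure_map hYm.aemeasurable
    set F : (EuclideanSpace ℝ (Fin p)) × (Fin (m+1) → EuclideanSpace ℝ (Fin p)) → ℝ≥0∞ :=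
      fun z => ENNReal.ofReal ((Phi p m (Q 0) z.2 + ⟪z.1, tvec p m Q z.2⟫)^4) with hF
    have htvecm : Measurable (fun y => tvec p m Q y) :=
      (WithLp.measurable_toLp 2 _).comp (measurable_pi_lambda _ (fun j : Fin p => measurable_Phi (Q j.succ)))
    have hFm : Measurable F := by
      apply ENNReal.measurable_ofReal.comp
      apply Measurable.pow_const
      apply Measurable.add
      · exact (measurable_Phi (Q 0)).comp measurable_snd
      · have hrw : (fun z : (EuclideanSpace ℝ (Fin p)) ×
            (Fin (m+1) → EuclideanSpace ℝ (Fin p)) => ⟪z.1, tvec p m Q z.2⟫)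
            = fun z => ∑ j, z.1 j * Phi p m (Q j.succ) z.2 := by
          funext z
          rw [inner_sum_form]
          rfl
        rw [hrw]
        exact Finset.measurable_sum _ (fun j _ =>
          ((measurable_pi_apply j).comp ((WithLp.measurable_ofLp 2 _).comp measurable_fst)).mul
            ((measurable_Phi (Q j.succ)).comp measurable_snd))
    have hmap : μ.map (fun ω => (u 0 ω, Y ω)) = νX.prod νY :=
      (indepFun_iff_map_prod_eq_prod_map_map hXm.aemeasurable hYm.aemeasurable).mp hXY
    have hchain : (∫⁻ ω, ENNReal.ofReal (Sfun u (m+1) q ω ^ 4) ∂μ)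
        = ∫⁻ y, ∫⁻ x, F (x, y) ∂νX ∂νY := by
      have h1 : (∫⁻ ω, ENNReal.ofReal (Sfun u (m+1) q ω ^ 4) ∂μ)
          = ∫⁻ ω, F (u 0 ω, Y ω) ∂μ := by
        apply lintegral_congr
        intro ω
        rw [hF]
        simp only
        rw [hstep ω]
      rw [h1, ← lintegral_map hFm (hXm.prodMk hYm), hmap,
        lintegral_prod_symm _ hFm.aemeasurable]
    set I : (Fin (m+1) → EuclideanSpace ℝ (Fin p)) → ℝ≥0∞ :=
      fun y => ∫⁻ x, F (x, y) ∂νX with hI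
    have hIm : Measurable I := hFm.lintegral_prod_left'
    have hIeq : ∀ y, I y
        = ∫⁻ ω, ENNReal.ofReal ((Phi p m (Q 0) y + ⟪u 0 ω, tvec p m Q y⟫)^4) ∂μ := by
      intro y
      rw [hI]
      simp only
      rw [hνX, lintegral_map (show Measurable (fun x => F (x, y)) from
        hFm.comp measurable_prodMk_right) hXm]
    have hIup : ∀ y, I y ≠ ∞ →
        I y ≤ ENNReal.ofReal (M * (∑ i, Phi p m (Q i) y ^ 2)^2) := by
      intro y hy
      rw [hIeq y] at hy ⊢
      have h := (lemB hXm (hmean 0 (by omega)) (hiso 0 (by omega)) hγ (hhyp 0 (by omega))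
        (hthird 0 (by omega)) (Phi p m (Q 0) y) (tvec p m Q y)).2 hy
      rw [phi_sq_sum] at h
      exact h
    have hIlow : ∀ y, ENNReal.ofReal ((∑ i, Phi p m (Q i) y ^ 2)^2) ≤ 2 * I y := by
      intro y
      rw [hIeq y]
      have h := (lemB hXm (hmean 0 (by omega)) (hiso 0 (by omega)) hγ (hhyp 0 (by omega))
        (hthird 0 (by omega)) (Phi p m (Q 0) y) (tvec p m Q y)).1
      rw [phi_sq_sum] at h
      exact h
    have hfinY : (∫⁻ y, I y ∂νY) ≠ ∞ := by
      rw [← hchain]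
      exact hfin
    have hae : ∀ᵐ y ∂νY, I y < ∞ := ae_lt_top hIm hfinY
    have hmeasR : Measurable (fun y => ENNReal.ofReal ((∑ i, Phi p m (Q i) y ^ 2)^2)) :=
      ENNReal.measurable_ofReal.comp ((Finset.measurable_sum _
        (fun i _ => (measurable_Phi (Q i)).pow_const 2)).pow_const 2)
    set J := ∫⁻ y, ENNReal.ofReal ((∑ i, Phi p m (Q i) y ^ 2)^2) ∂νY with hJ
    have hbound1 : (∫⁻ y, I y ∂νY) ≤ ENNReal.ofReal M * J := by
      rw [hJ, ← lintegral_const_mul _ hmeasR]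
      apply lintegral_mono_ae
      filter_upwards [hae] with y hy
      calc I y ≤ ENNReal.ofReal (M * (∑ i, Phi p m (Q i) y ^ 2)^2) := hIup y hy.ne
        _ = ENNReal.ofReal M * ENNReal.ofReal ((∑ i, Phi p m (Q i) y ^ 2)^2) :=
          ENNReal.ofReal_mul hM0
    have hJfin : J ≠ ∞ := by
      have hle : J ≤ 2 * ∫⁻ y, I y ∂νY := by
        rw [hJ, ← lintegral_const_mul 2 hIm]
        exact lintegral_mono (fun y => hIlow y)
      exact ne_top_of_le_ne_top (ENNReal.mul_ne_top (by norm_num) hfinY) hle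
    have hmeasZ : ∀ i, Measurable (Sfun u' m (Q i)) :=
      fun i => measurable_Sfun u' m (fun s _ => hmeas (s+1) (by omega)) (Q i)
    have hJΩ : J = ∫⁻ ω, ENNReal.ofReal ((∑ i, Sfun u' m (Q i) ω ^ 2)^2) ∂μ := by
      rw [hJ, hνY, lintegral_map hmeasR hYm]
      exact lintegral_congr (fun ω => rfl)
    set g : Fin (p+1) → Ω → ℝ≥0∞ := fun i ω => ENNReal.ofReal (Sfun u' m (Q i) ω ^ 2) with hg
    have hgm : ∀ i, Measurable (g i) :=
      fun i => ENNReal.measurable_ofReal.comp ((hmeasZ i).pow_const 2)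
    have hptw : ∀ ω, ENNReal.ofReal ((∑ i, Sfun u' m (Q i) ω ^ 2)^2)
        = (∑ i, g i ω) ^ (2:ℝ) := by
      intro ω
      rw [rpow_two_eq, ENNReal.ofReal_pow (by positivity),
        ENNReal.ofReal_sum_of_nonneg (fun i _ => by positivity)]
    have hgsq : ∀ i ω, g i ω ^ (2:ℝ) = ENNReal.ofReal (Sfun u' m (Q i) ω ^ 4) := by
      intro i ω
      rw [rpow_two_eq, hg]
      simp only
      rw [← ENNReal.ofReal_pow (sq_nonneg _)]
      congr 1
      ring
    have hJΩ2 : J = ∫⁻ ω, (∑ i, g i ω) ^ (2:ℝ) ∂μ := by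
      rw [hJΩ]
      exact lintegral_congr hptw
    have hJi_le : ∀ i, (∫⁻ ω, g i ω ^ (2:ℝ) ∂μ) ≤ J := by
      intro i
      rw [hJΩ2]
      apply lintegral_mono
      intro ω
      exact ENNReal.rpow_le_rpow
        (Finset.single_le_sum (f := fun j => g j ω) (fun j _ => zero_le) (Finset.mem_univ i))
        (by norm_num)
    have hindep' : iIndepFun
        (m := fun _ : Fin (m+1) => (inferInstance : MeasurableSpace (EuclideanSpace ℝ (Fin p))))
        (fun s : Fin (m+1) => u' s) μ :=
      iIndepFun_precomp hindep (Fin.succ_injective (m+1))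
    have hIH : ∀ i, (∫⁻ ω, g i ω ^ (2:ℝ) ∂μ)
        ≤ ENNReal.ofReal (M^(m+1) * (∑ c, Q i c ^ 2)^2) := by
      intro i
      have heqi : (∫⁻ ω, g i ω ^ (2:ℝ) ∂μ)
          = ∫⁻ ω, ENNReal.ofReal (Sfun u' m (Q i) ω ^ 4) ∂μ :=
        lintegral_congr (fun ω => hgsq i ω)
      rw [heqi]
      apply ih u' (fun s _ => hmeas (s+1) (by omega)) hindep'
        (fun s _ => hmean (s+1) (by omega)) (fun s _ => hiso (s+1) (by omega))
        (fun s _ => hhyp (s+1) (by omega)) (fun s _ => hthird (s+1) (by omega)) (Q i)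
      rw [← heqi]
      exact ne_top_of_le_ne_top hJfin (hJi_le i)
    set cc : Fin (p+1) → ℝ := fun i => Real.sqrt (M^(m+1)) * (∑ c, Q i c ^ 2) with hcc
    have hcc0 : ∀ i, 0 ≤ cc i :=
      fun i => mul_nonneg (Real.sqrt_nonneg _) (Finset.sum_nonneg fun _ _ => sq_nonneg _)
    have hsqrt : ∀ i, (∫⁻ ω, g i ω ^ (2:ℝ) ∂μ) ^ ((1:ℝ)/2) ≤ ENNReal.ofReal (cc i) := by
      intro i
      apply ennreal_le_sqrt
      calc (∫⁻ ω, g i ω ^ (2:ℝ) ∂μ)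
          ≤ ENNReal.ofReal (M^(m+1) * (∑ c, Q i c ^ 2)^2) := hIH i
        _ = ENNReal.ofReal (cc i) ^ (2:ℝ) := by
            rw [rpow_two_eq, ← ENNReal.ofReal_pow (hcc0 i)]
            congr 1
            rw [hcc]
            simp only
            rw [mul_pow, Real.sq_sqrt (by positivity)]
    have hmink := minkowski_sum μ Finset.univ g hgm
    have hJle : J ≤ (∑ i, ENNReal.ofReal (cc i)) ^ (2:ℝ) := by
      rw [hJΩ2]
      exact ennreal_sq_from_sqrt (le_trans hmink (Finset.sum_le_sum (fun i _ => hsqrt i)))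
    have hfinal : J ≤ ENNReal.ofReal (M^(m+1) * (∑ c, q c ^ 2)^2) := by
      refine le_trans hJle ?_
      rw [← ENNReal.ofReal_sum_of_nonneg (fun i _ => hcc0 i), rpow_two_eq,
        ← ENNReal.ofReal_pow (Finset.sum_nonneg fun i _ => hcc0 i)]
      apply ENNReal.ofReal_le_ofReal
      have hsum : (∑ i, cc i) = Real.sqrt (M^(m+1)) * ∑ i, ∑ c, Q i c ^ 2 := by
        rw [hcc, ← Finset.mul_sum]
      rw [hsum, mul_pow, Real.sq_sqrt (by positivity)]
      rw [show ∑ i, ∑ c, Q i c ^ 2 = ∑ c, q c ^ 2 from sum_sq_step q]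
    calc (∫⁻ ω, ENNReal.ofReal (Sfun u (m+1) q ω ^ 4) ∂μ)
        = ∫⁻ y, I y ∂νY := hchain
      _ ≤ ENNReal.ofReal M * J := hbound1
      _ ≤ ENNReal.ofReal M * ENNReal.ofReal (M^(m+1) * (∑ c, q c ^ 2)^2) :=
          mul_le_mul_right hfinal _
      _ = ENNReal.ofReal (M^(m+1+1) * (∑ c, q c ^ 2)^2) := by
          rw [← ENNReal.ofReal_mul hM0]
          congr 1
          ring

/-- fourth moment of a block: for independent zero-mean, isotropic,
`(4,2,γ)`-hypercontractive vectors with zero third moment marginals,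
`E[(qᵀb_k)⁴] ≤ (max 3 γ)^k ‖q‖⁴`. -/
theorem block_fourth_moment {Ω : Type*} [MeasurableSpace Ω]
    (μ : Measure Ω) [IsProbabilityMeasure μ]
    (p k : ℕ) (hp : 1 ≤ p) (hk : 1 ≤ k) (γ : ℝ) (hγ : 0 < γ)
    (v : ℕ → Ω → EuclideanSpace ℝ (Fin p))
    (hmeas : ∀ s, 1 ≤ s → s ≤ k → Measurable (v s))
    (hindep : iIndepFun (m := fun _ : Fin k =>
      (inferInstance : MeasurableSpace (EuclideanSpace ℝ (Fin p))))
      (fun s : Fin k => v (s.val + 1)) μ)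
    (hmean : ∀ s, 1 ≤ s → s ≤ k → (∫ ω, v s ω ∂μ) = 0)
    (hiso : ∀ s, 1 ≤ s → s ≤ k → Isotropic (v s) μ)
    (hhyp : ∀ s, 1 ≤ s → s ≤ k → Hypercontractive γ (v s) μ)
    (hthird : ∀ s, 1 ≤ s → s ≤ k → ZeroThirdMoment (v s) μ)
    (q : EuclideanSpace ℝ ((Fin (k - 1) → Fin (p + 1)) × Fin p)) :
    (∫ ω, ⟪q, blockVec (fun s => v s ω) k⟫ ^ 4 ∂μ) ≤ (max 3 γ) ^ k * ‖q‖ ^ 4 := by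
  obtain ⟨m, rfl⟩ : ∃ m, k = m + 1 := ⟨k - 1, (Nat.succ_pred_eq_of_pos hk).symm⟩
  set u : ℕ → Ω → EuclideanSpace ℝ (Fin p) := fun s => v (s + 1) with hu
  have hSeq : ∀ ω, ⟪q, blockVec (fun s => v s ω) (m+1)⟫ = Sfun u m q ω := by
    intro ω
    rw [inner_sum_form]
    rfl
  have humeas : ∀ s ≤ m, Measurable (u s) := fun s hs => hmeas (s+1) (by omega) (by omega)
  have hSm : Measurable (fun ω => Sfun u m q ω ^ 4) :=
    (measurable_Sfun u m humeas q).pow_const 4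
  have hM1 : (0:ℝ) ≤ (max 3 γ) ^ (m+1) * ‖q‖ ^ 4 := by
    apply mul_nonneg (pow_nonneg (le_trans (by norm_num) (le_max_left 3 γ)) _)
    positivity
  by_cases hfin : (∫⁻ ω, ENNReal.ofReal (Sfun u m q ω ^ 4) ∂μ) = ∞
  · have hnint : ¬ Integrable (fun ω => ⟪q, blockVec (fun s => v s ω) (m+1)⟫ ^ 4) μ := by
      intro hint
      have h1 : Integrable (fun ω => Sfun u m q ω ^ 4) μ :=
        hint.congr (ae_of_all _ fun ω => congrArg (· ^ 4) (hSeq ω))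
      exact (lintegral_ofReal_ne_top_iff_integrable hSm.aestronglyMeasurable
        (ae_of_all _ fun ω => by positivity)).mpr h1 hfin
    rw [integral_undef hnint]
    exact hM1
  · have hb := aux hγ m u humeas hindep (fun s hs => hmean (s+1) (by omega) (by omega))
      (fun s hs => hiso (s+1) (by omega) (by omega))
      (fun s hs => hhyp (s+1) (by omega) (by omega))
      (fun s hs => hthird (s+1) (by omega) (by omega)) q hfin
    have hint : Integrable (fun ω => Sfun u m q ω ^ 4) μ :=
      (lintegral_ofReal_ne_top_iff_integrable hSm.aestronglyMeasurable
        (ae_of_all _ fun ω => by positivity)).mp hfin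
    have h2 : (∫ ω, Sfun u m q ω ^ 4 ∂μ)
        = (∫⁻ ω, ENNReal.ofReal (Sfun u m q ω ^ 4) ∂μ).toReal := by
      rw [← ofReal_integral_eq_lintegral_ofReal hint (ae_of_all _ fun ω => by positivity),
        ENNReal.toReal_ofReal (integral_nonneg fun ω => by positivity)]
    have hMq : (0:ℝ) ≤ (max 3 γ)^(m+1) * (∑ c, q c ^ 2)^2 :=
      mul_nonneg (pow_nonneg (le_trans (by norm_num) (le_max_left 3 γ)) _) (sq_nonneg _)
    have htr := ENNReal.toReal_mono (show ENNReal.ofReal ((max 3 γ)^(m+1)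
      * (∑ c, q c ^ 2)^2) ≠ ⊤ from ENNReal.ofReal_ne_top) hb
    rw [ENNReal.toReal_ofReal hMq] at htr
    calc (∫ ω, ⟪q, blockVec (fun s => v s ω) (m+1)⟫ ^ 4 ∂μ)
        = ∫ ω, Sfun u m q ω ^ 4 ∂μ :=
          integral_congr_ae (ae_of_all _ fun ω => congrArg (· ^ 4) (hSeq ω))
      _ = (∫⁻ ω, ENNReal.ofReal (Sfun u m q ω ^ 4) ∂μ).toReal := h2
      _ ≤ (max 3 γ)^(m+1) * (∑ c, q c ^ 2)^2 := htr
      _ = (max 3 γ)^(m+1) * ‖q‖ ^ 4 := by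
          rw [show ‖q‖ ^ 4 = (‖q‖ ^ 2) ^ 2 by ring, norm_sq_sum q]
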